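/- Let (X,σ) be a shift space whose language 𝓛 admits a decomposition 𝓛 = 𝓒^p 𝓖 𝓒^s satisfying Conditions (I) and (II). Then for every γ ∈ (0,1) there exists C₉ > 0 such that for every measure of maximal entropy ν, every n ∈ ℕ, and every subset 𝓓_n ⊆ 𝓛_n with ν(⋃_{w∈𝓓_n} [w]) ≥ γ, one has #𝓓_n ≥ C₉ e^{n h(𝓛)}. -/

import Mathlib

open MeasureTheory Filter Topology
open scoped ENNReal

/-- The full two-sided shift on `p` symbols. -/
abbrev FullShift (p : ℕ) : Type := ℤ → Fin p

/-- The left shift map. -/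
def shiftMap {p : ℕ} : FullShift p → FullShift p := fun x n => x (n + 1)

/-- A (two-sided) shift space: a nonempty closed shift-invariant subset of the full shift. -/
def IsShiftSpace {p : ℕ} (X : Set (FullShift p)) : Prop :=
  X.Nonempty ∧ IsClosed X ∧ shiftMap '' X = X

/-- `x` spells the word `w` starting at position `k`. -/
def spellsAt {p : ℕ} (x : FullShift p) (k : ℤ) (w : List (Fin p)) : Prop :=
  ∀ i : Fin w.length, x (k + (i : ℕ)) = w.get i

/-- The language of a shift space: all finite words occurring in its sequences. -/
def language {p : ℕ} (X : Set (FullShift p)) : Set (List (Fin p)) :=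
  {w | ∃ x ∈ X, ∃ k : ℤ, spellsAt x k w}

/-- Words of length `n` in a collection `D`. -/
def wordsOfLen {p : ℕ} (D : Set (List (Fin p))) (n : ℕ) : Set (List (Fin p)) :=
  {w ∈ D | w.length = n}

/-- Exponential growth rate `h(D) = limsup (1/n) log #D_n` of a collection of words. -/
noncomputable def growth {p : ℕ} (D : Set (List (Fin p))) : ℝ :=
  Filter.atTop.limsup fun n : ℕ => Real.log ((wordsOfLen D n).ncard) / n

/-- Topological entropy of a shift space (= the growth rate of its language). -/
noncomputable def htop {p : ℕ} (X : Set (FullShift p)) : ℝ := growth (language X)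

/-- `glueWords m w v = w 0 ++ v 0 ++ w 1 ++ v 1 ++ ⋯ ++ v (m-1) ++ w m`. -/
def glueWords {p : ℕ} : ℕ → (ℕ → List (Fin p)) → (ℕ → List (Fin p)) → List (Fin p)
  | 0, w, _ => w 0
  | (m + 1), w, v => glueWords m w v ++ v m ++ w (m + 1)

/-- (S)-specification on `G ⊆ L` with gap size `t`. -/
def HasSpecS {p : ℕ} (L G : Set (List (Fin p))) (t : ℕ) : Prop :=
  ∀ (m : ℕ) (w : ℕ → List (Fin p)), (∀ i ≤ m, w i ∈ G) →
    ∃ v : ℕ → List (Fin p), (∀ i < m, v i ∈ L ∧ (v i).length = t) ∧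
      glueWords m w v ∈ L

/-- The central cylinder of a word `w`, starting at position `-⌊|w|/2⌋`. -/
def centralCylinder {p : ℕ} (w : List (Fin p)) : Set (FullShift p) :=
  {x | spellsAt x (-((w.length / 2 : ℕ) : ℤ)) w}

/-- (Per)-specification on `G` with gap size `t`: the glued word can moreover be realized by
a periodic point of period exactly `|x| + t`. -/
def HasSpecPer {p : ℕ} (X : Set (FullShift p)) (G : Set (List (Fin p))) (t : ℕ) : Prop :=
  ∀ (m : ℕ) (w : ℕ → List (Fin p)), (∀ i ≤ m, w i ∈ G) →
    ∃ v : ℕ → List (Fin p), (∀ i < m, v i ∈ language X ∧ (v i).length = t) ∧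
      glueWords m w v ∈ language X ∧
      ∃ z ∈ X, shiftMap^[(glueWords m w v).length + t] z = z ∧
        z ∈ centralCylinder (glueWords m w v)

/-- A decomposition `L = 𝓒ᵖ 𝓖 𝓒ˢ` of a language. -/
def Decomp {p : ℕ} (L Cp G Cs : Set (List (Fin p))) : Prop :=
  Cp ⊆ L ∧ G ⊆ L ∧ Cs ⊆ L ∧
    ∀ w ∈ L, ∃ u v x, u ∈ Cp ∧ v ∈ G ∧ x ∈ Cs ∧ w = u ++ v ++ x

/-- `𝓖(M)`: words of `L` decomposable with prefix and suffix of length at most `M`. -/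
def GM {p : ℕ} (L Cp G Cs : Set (List (Fin p))) (M : ℕ) : Set (List (Fin p)) :=
  {w ∈ L | ∃ u v x, u ∈ Cp ∧ v ∈ G ∧ x ∈ Cs ∧ u.length ≤ M ∧ x.length ≤ M ∧ w = u ++ v ++ x}

/-- Condition (III): uniformly controlled extension of words of `𝓖(M)` to words of `𝓖`. -/
def CondIII {p : ℕ} (L Cp G Cs : Set (List (Fin p))) : Prop :=
  ∀ M : ℕ, ∃ τ : ℕ, ∀ v ∈ GM L Cp G Cs M,
    ∃ u w : List (Fin p), u.length ≤ τ ∧ w.length ≤ τ ∧ u ++ v ++ w ∈ G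

/-- Shift invariance of a measure. -/
def ShiftInvariant {p : ℕ} (μ : Measure (FullShift p)) : Prop :=
  Measure.map shiftMap μ = μ

/-- Measure-theoretic (Kolmogorov–Sinai) entropy of a shift-invariant measure, computed via
the generating partitions into cylinders of length `n`. -/
noncomputable def entropyOf {p : ℕ} (μ : Measure (FullShift p)) : ℝ :=
  Filter.atTop.liminf fun n : ℕ =>
    (∑ w : Fin n → Fin p,
      Real.negMulLog (μ {x : FullShift p | ∀ i : Fin n, x ((i : ℕ) : ℤ) = w i}).toReal) / n

/-- `μ` is a measure of maximal entropy for the shift space `X`. -/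
def IsMME {p : ℕ} (X : Set (FullShift p)) (μ : Measure (FullShift p)) : Prop :=
  IsProbabilityMeasure μ ∧ ShiftInvariant μ ∧ μ X = 1 ∧ entropyOf μ = htop X

/-- A shift space is intrinsically ergodic if it has exactly one measure of maximal entropy. -/
def IntrinsicallyErgodic {p : ℕ} (X : Set (FullShift p)) : Prop :=
  ∃! μ : Measure (FullShift p), IsMME X μ

/-- The set of points of `X` periodic of period at most `n`. -/
def PerN {p : ℕ} (X : Set (FullShift p)) (n : ℕ) : Set (FullShift p) :=
  {x ∈ X | ∃ k, 1 ≤ k ∧ k ≤ n ∧ shiftMap^[k] x = x}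

/-- The measure evenly distributed on the periodic points of period at most `n`. -/
noncomputable def perMeasure {p : ℕ} (X : Set (FullShift p)) (n : ℕ) :
    Measure (FullShift p) :=
  (((PerN X n).ncard : ℝ≥0∞))⁻¹ •
    Measure.sum (fun x : (PerN X n) => Measure.dirac (x : FullShift p))

/-- Weak* convergence of a sequence of measures. -/
def WeakStarLimit {p : ℕ} (μs : ℕ → Measure (FullShift p)) (μ : Measure (FullShift p)) : Prop :=
  ∀ f : C(FullShift p, ℝ),
    Tendsto (fun n => ∫ x, f x ∂(μs n)) atTop (𝓝 (∫ x, f x ∂μ))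

/-- `Y` is a subshift factor of `X`. -/
def IsSubshiftFactor {p q : ℕ} (X : Set (FullShift p)) (Y : Set (FullShift q)) : Prop :=
  IsShiftSpace Y ∧ ∃ π : FullShift p → FullShift q,
    Continuous π ∧ π '' X = Y ∧ ∀ x ∈ X, π (shiftMap x) = shiftMap (π x)

/-! ### Auxiliary lemmas -/

section Aux

variable {p : ℕ}

lemma shiftMap_iterate (x : FullShift p) (k : ℕ) (n : ℤ) :
    (shiftMap^[k] x) n = x (n + k) := by
  induction k generalizing n with
  | zero => simp
  | succ k ih =>
    rw [Function.iterate_succ_apply', shiftMap, ih]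
    congr 1
    push_cast
    ring

lemma measurable_shiftMap : Measurable (shiftMap (p := p)) :=
  measurable_pi_lambda _ fun n => measurable_pi_apply _

lemma measurable_shiftMap_iterate (k : ℕ) : Measurable (shiftMap (p := p))^[k] :=
  measurable_shiftMap.iterate k

lemma ShiftInvariant.map_iterate {μ : Measure (FullShift p)} (h : ShiftInvariant μ) (k : ℕ) :
    Measure.map (shiftMap^[k]) μ = μ := by
  induction k with
  | zero => simp [Measure.map_id]
  | succ k ih =>
    rw [Function.iterate_succ', ← Measure.map_map measurable_shiftMap
      (measurable_shiftMap_iterate k), ih, h]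

lemma ShiftInvariant.measure_preimage {μ : Measure (FullShift p)} (h : ShiftInvariant μ)
    (k : ℕ) {S : Set (FullShift p)} (hS : MeasurableSet S) :
    μ (shiftMap^[k] ⁻¹' S) = μ S := by
  conv_rhs => rw [← h.map_iterate k]
  rw [Measure.map_apply (measurable_shiftMap_iterate k) hS]

/-! #### Language basics -/

lemma finite_wordsOfLen (D : Set (List (Fin p))) (n : ℕ) : (wordsOfLen D n).Finite :=
  (List.finite_length_eq (Fin p) n).subset fun _ hw => hw.2

lemma mem_language_of_spells {X : Set (FullShift p)} {x : FullShift p} (hx : x ∈ X)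
    (k : ℤ) (w : List (Fin p)) (h : spellsAt x k w) : w ∈ language X :=
  ⟨x, hx, k, h⟩

lemma exists_word_of_len {X : Set (FullShift p)} (hX : X.Nonempty) (n : ℕ) :
    ∃ w, w ∈ wordsOfLen (language X) n := by
  obtain ⟨x, hx⟩ := hX
  refine ⟨List.ofFn (fun i : Fin n => x (i : ℕ)), ⟨x, hx, 0, ?_⟩, by simp⟩
  intro i
  simp [List.get_ofFn]

lemma spellsAt_append {x : FullShift p} {k : ℤ} {u v : List (Fin p)} :
    spellsAt x k (u ++ v) ↔ spellsAt x k u ∧ spellsAt x (k + u.length) v := by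
  constructor
  · intro h
    constructor
    · intro i
      have hi : (i : ℕ) < (u ++ v).length := by
        simp only [List.length_append]; omega
      have := h ⟨i, hi⟩
      simp only [List.get_eq_getElem] at this ⊢
      rwa [List.getElem_append_left i.isLt] at this
    · intro i
      have hi : u.length + (i : ℕ) < (u ++ v).length := by
        simp only [List.length_append]; omega
      have := h ⟨u.length + (i : ℕ), hi⟩
      simp only [List.get_eq_getElem] at this ⊢
      rw [List.getElem_append_right (by omega)] at this
      simp only [Nat.add_sub_cancel_left] at this
      rw [← this]
      congr 1
      push_cast
      ring
  · rintro ⟨h1, h2⟩ i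
    rcases lt_or_ge (i : ℕ) u.length with hi | hi
    · have := h1 ⟨i, hi⟩
      simp only [List.get_eq_getElem] at this ⊢
      rwa [List.getElem_append_left hi]
    · have hi2 : (i : ℕ) - u.length < v.length := by
        have := i.isLt
        simp only [List.length_append] at this
        omega
      have := h2 ⟨(i : ℕ) - u.length, hi2⟩
      simp only [List.get_eq_getElem] at this ⊢
      rw [List.getElem_append_right hi]
      rw [← this]
      congr 1
      push_cast [Nat.cast_sub hi]
      ring

lemma append_mem_language {X : Set (FullShift p)} {u v : List (Fin p)}
    (h : u ++ v ∈ language X) : u ∈ language X ∧ v ∈ language X := by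
  obtain ⟨x, hx, k, hs⟩ := h
  rw [spellsAt_append] at hs
  exact ⟨⟨x, hx, k, hs.1⟩, ⟨x, hx, k + u.length, hs.2⟩⟩

lemma exists_snoc_mem_language {X : Set (FullShift p)} {w : List (Fin p)}
    (h : w ∈ language X) : ∃ a, w ++ [a] ∈ language X := by
  obtain ⟨x, hx, k, hs⟩ := h
  refine ⟨x (k + w.length), x, hx, k, ?_⟩
  rw [spellsAt_append]
  refine ⟨hs, ?_⟩
  intro i
  have h0 : (i : ℕ) = 0 := by have := i.isLt; simp only [List.length_singleton] at this; omega
  simp only [List.get_eq_getElem, h0, List.getElem_singleton]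
  congr 1
  push_cast [h0]
  ring

end Aux


/-! ### Counting and Fekete lemmas -/

section Counting

variable {p : ℕ} {X : Set (FullShift p)}

lemma ncard_wordsOfLen_le_pow (D : Set (List (Fin p))) (n : ℕ) :
    (wordsOfLen D n).ncard ≤ p ^ n := by
  have h1 : wordsOfLen D n ⊆ {l : List (Fin p) | l.length = n} := fun w hw => hw.2
  have h2 : {l : List (Fin p) | l.length = n} = List.ofFn '' (Set.univ : Set (Fin n → Fin p)) := by
    ext l
    simp only [Set.mem_setOf_eq, Set.image_univ, Set.mem_range]
    constructor
    · intro hl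
      subst hl
      exact ⟨l.get, List.ofFn_get l⟩
    · rintro ⟨f, rfl⟩; simp
  calc (wordsOfLen D n).ncard ≤ {l : List (Fin p) | l.length = n}.ncard :=
        Set.ncard_le_ncard h1 (List.finite_length_eq _ _)
    _ = p ^ n := by
        rw [h2, Set.ncard_image_of_injective _ List.ofFn_injective]
        simp [Set.ncard_univ, Nat.card_eq_fintype_card]

lemma one_le_ncard_L (hX : X.Nonempty) (n : ℕ) :
    1 ≤ (wordsOfLen (language X) n).ncard := by
  obtain ⟨w, hw⟩ := exists_word_of_len hX n
  exact (Set.ncard_pos (finite_wordsOfLen _ _)).2 ⟨w, hw⟩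

lemma ncard_L_monotone : Monotone (fun n => (wordsOfLen (language X) n).ncard) := by
  apply monotone_nat_of_le_succ
  intro n
  have hch : ∀ w ∈ wordsOfLen (language X) n, ∃ a, w ++ [a] ∈ language X :=
    fun w hw => exists_snoc_mem_language hw.1
  choose f hf using hch
  classical
  refine Set.ncard_le_ncard_of_injOn
    (fun w => if hw : w ∈ wordsOfLen (language X) n then w ++ [f w hw] else w) ?_ ?_
    (finite_wordsOfLen _ _)
  · intro w hw
    simp only [dif_pos hw]
    exact ⟨hf w hw, by simp [hw.2]⟩
  · intro a ha b hb hab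
    simp only [dif_pos ha, dif_pos hb] at hab
    exact (List.append_inj hab (ha.2.trans hb.2.symm)).1

lemma ncard_L_submul (m n : ℕ) :
    (wordsOfLen (language X) (m + n)).ncard ≤
      (wordsOfLen (language X) m).ncard * (wordsOfLen (language X) n).ncard := by
  classical
  have hA := finite_wordsOfLen (language X) m
  have hB := finite_wordsOfLen (language X) n
  have := Set.ncard_le_ncard_of_injOn
    (s := wordsOfLen (language X) (m + n))
    (t := ((hA.toFinset ×ˢ hB.toFinset : Finset (List (Fin p) × List (Fin p))) :
        Set (List (Fin p) × List (Fin p))))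
    (fun w => (w.take m, w.drop m)) ?_ ?_ (Finset.finite_toSet _)
  · rwa [Set.ncard_coe_finset, Finset.card_product,
      ← Set.ncard_eq_toFinset_card (wordsOfLen (language X) m) hA,
      ← Set.ncard_eq_toFinset_card (wordsOfLen (language X) n) hB] at this
  · intro w hw
    have hsplit : w.take m ++ w.drop m = w := List.take_append_drop m w
    have hmem : w.take m ∈ language X ∧ w.drop m ∈ language X := by
      rw [← hsplit] at hw
      exact append_mem_language hw.1
    simp only [Finset.coe_product, Set.mem_prod, Set.Finite.coe_toFinset]
    refine ⟨⟨hmem.1, ?_⟩, hmem.2, ?_⟩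
    · simp [List.length_take, hw.2]
    · simp [List.length_drop, hw.2]
  · intro a ha b hb hab
    have h1 := congrArg Prod.fst hab
    have h2 := congrArg Prod.snd hab
    simp only at h1 h2
    rw [← List.take_append_drop m a, h1, h2, List.take_append_drop]

/-- `u n = log #L_n`. -/
noncomputable def uL (X : Set (FullShift p)) (n : ℕ) : ℝ :=
  Real.log ((wordsOfLen (language X) n).ncard)

lemma uL_nonneg (hX : X.Nonempty) (n : ℕ) : 0 ≤ uL X n :=
  Real.log_nonneg (by exact_mod_cast one_le_ncard_L hX n)

lemma uL_subadditive (hX : X.Nonempty) : Subadditive (uL X) := by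
  intro m n
  have h1 : (1 : ℝ) ≤ ((wordsOfLen (language X) m).ncard : ℝ) := by
    exact_mod_cast one_le_ncard_L hX m
  have h2 : (1 : ℝ) ≤ ((wordsOfLen (language X) n).ncard : ℝ) := by
    exact_mod_cast one_le_ncard_L hX n
  have h3 : ((wordsOfLen (language X) (m + n)).ncard : ℝ) ≤
      ((wordsOfLen (language X) m).ncard : ℝ) * ((wordsOfLen (language X) n).ncard : ℝ) := by
    exact_mod_cast ncard_L_submul m n
  calc uL X (m + n) ≤ Real.log (((wordsOfLen (language X) m).ncard : ℝ) *
        ((wordsOfLen (language X) n).ncard : ℝ)) := by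
        apply Real.log_le_log (by exact_mod_cast one_le_ncard_L hX (m + n)) h3
    _ = uL X m + uL X n := Real.log_mul (by linarith) (by linarith)

lemma uL_mono (hX : X.Nonempty) : Monotone (uL X) := by
  intro a b hab
  apply Real.log_le_log (by exact_mod_cast one_le_ncard_L hX a)
  exact_mod_cast ncard_L_monotone hab

lemma uL_bddBelow (hX : X.Nonempty) : BddBelow (Set.range fun n : ℕ => uL X n / n) := by
  refine ⟨0, ?_⟩
  rintro x ⟨n, rfl⟩
  exact div_nonneg (uL_nonneg hX n) (Nat.cast_nonneg n)

lemma tendsto_uL_div (hX : X.Nonempty) :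
    Tendsto (fun n : ℕ => uL X n / n) atTop (𝓝 (htop X)) := by
  have h := (uL_subadditive hX).tendsto_lim (uL_bddBelow hX)
  have : htop X = (uL_subadditive hX).lim := by
    rw [htop, growth]
    exact h.limsup_eq
  rwa [this]

lemma nsmul_htop_le_uL (hX : X.Nonempty) (n : ℕ) : (n : ℝ) * htop X ≤ uL X n := by
  rcases Nat.eq_zero_or_pos n with rfl | hn
  · simpa using uL_nonneg hX 0
  · have h := (uL_subadditive hX).lim_le_div (uL_bddBelow hX) (n := n) hn.ne'
    have hlim : htop X = (uL_subadditive hX).lim := by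
      rw [htop, growth]
      exact ((uL_subadditive hX).tendsto_lim (uL_bddBelow hX)).limsup_eq
    rw [← hlim] at h
    rw [le_div_iff₀ (by exact_mod_cast hn)] at h
    rw [mul_comm]
    exact h

lemma htop_nonneg (hX : X.Nonempty) : 0 ≤ htop X :=
  ge_of_tendsto (tendsto_uL_div hX)
    (Filter.Eventually.of_forall fun n => div_nonneg (uL_nonneg hX n) (Nat.cast_nonneg n))

lemma exp_htop_le_ncard_L (hX : X.Nonempty) (n : ℕ) :
    Real.exp ((n : ℝ) * htop X) ≤ ((wordsOfLen (language X) n).ncard : ℝ) := by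
  have h1 : (0:ℝ) < ((wordsOfLen (language X) n).ncard : ℝ) := by
    exact_mod_cast one_le_ncard_L hX n
  calc Real.exp ((n : ℝ) * htop X) ≤ Real.exp (uL X n) :=
        Real.exp_le_exp.2 (nsmul_htop_le_uL hX n)
    _ = _ := by rw [uL, Real.exp_log h1]

end Counting

/-! ### Gluing lemmas -/

section Glue

variable {p : ℕ} {X : Set (FullShift p)}

lemma glueWords_length (m : ℕ) (w v : ℕ → List (Fin p)) (n t : ℕ)
    (hw : ∀ i ≤ m, (w i).length = n) (hv : ∀ i < m, (v i).length = t) :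
    (glueWords m w v).length = (m + 1) * n + m * t := by
  induction m with
  | zero => simp [glueWords, hw 0 le_rfl]
  | succ m ih =>
    have h1 := ih (fun i hi => hw i (by omega)) (fun i hi => hv i (by omega))
    show ((glueWords m w v ++ v m) ++ w (m + 1)).length = (m + 2) * n + (m + 1) * t
    rw [List.length_append, List.length_append, h1, hv m (by omega), hw (m + 1) le_rfl]
    ring

lemma glueWords_extract (m : ℕ) (w v : ℕ → List (Fin p)) (n t : ℕ)
    (hw : ∀ i ≤ m, (w i).length = n) (hv : ∀ i < m, (v i).length = t)
    (j : ℕ) (hj : j ≤ m) :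
    ((glueWords m w v).drop (j * (n + t))).take n = w j := by
  induction m with
  | zero =>
    have hj0 : j = 0 := by omega
    subst hj0
    show ((w 0).drop (0 * (n + t))).take n = w 0
    rw [zero_mul, List.drop_zero, List.take_of_length_le (le_of_eq (hw 0 le_rfl))]
  | succ m ih =>
    have hlen : (glueWords m w v).length = (m + 1) * n + m * t :=
      glueWords_length m w v n t (fun i hi => hw i (by omega)) (fun i hi => hv i (by omega))
    have hmul1 : j * (n + t) = j * n + j * t := by ring
    rcases Nat.lt_or_ge j (m + 1) with hj' | hj'
    · have hjm : j ≤ m := by omega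
      have hjn : j * n ≤ m * n := Nat.mul_le_mul_right n hjm
      have hjt : j * t ≤ m * t := Nat.mul_le_mul_right t hjm
      have hmn : (m + 1) * n = m * n + n := by ring
      have hdle : j * (n + t) ≤ (glueWords m w v).length := by
        rw [hlen]; omega
      have hdle2 : n ≤ ((glueWords m w v).drop (j * (n + t))).length := by
        rw [List.length_drop, hlen]
        have : (m + 1) * n = m * n + n := by ring
        omega
      show ((((glueWords m w v) ++ v m) ++ w (m + 1)).drop (j * (n + t))).take n = w j
      rw [List.drop_append_of_le_length (by rw [List.length_append]; omega),
        List.drop_append_of_le_length hdle,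
        List.take_append_of_le_length (by rw [List.length_append]; omega),
        List.take_append_of_le_length hdle2]
      exact ih (fun i hi => hw i (by omega)) (fun i hi => hv i (by omega)) hjm
    · have hj2 : j = m + 1 := by omega
      subst hj2
      have hlen2 : ((glueWords m w v) ++ v m).length = (m + 1) * (n + t) := by
        rw [List.length_append, hlen, hv m (by omega)]
        ring
      show ((((glueWords m w v) ++ v m) ++ w (m + 1)).drop ((m + 1) * (n + t))).take n = w (m + 1)
      rw [← hlen2, List.drop_left, List.take_of_length_le (le_of_eq (hw (m + 1) le_rfl))]

lemma pow_le_ncard_L_of_spec {G : Set (List (Fin p))} {t : ℕ}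
    (hspec : HasSpecS (language X) G t) (n m : ℕ) :
    (wordsOfLen G n).ncard ^ (m + 1) ≤
      (wordsOfLen (language X) ((m + 1) * n + m * t)).ncard := by
  classical
  have key : ∀ f : Fin (m + 1) → List (Fin p), (∀ i, f i ∈ wordsOfLen G n) →
      ∃ g ∈ wordsOfLen (language X) ((m + 1) * n + m * t),
        ∀ j : Fin (m + 1), ((g.drop ((j : ℕ) * (n + t))).take n) = f j := by
    intro f hf
    set fe : ℕ → List (Fin p) := fun i => if h : i < m + 1 then f ⟨i, h⟩ else f 0 with hfe
    have hwlen : ∀ i ≤ m, (fe i).length = n := by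
      intro i hi
      simp only [hfe, dif_pos (by omega : i < m + 1)]
      exact (hf ⟨i, by omega⟩).2
    have hmem : ∀ i ≤ m, fe i ∈ G := by
      intro i hi
      simp only [hfe, dif_pos (by omega : i < m + 1)]
      exact (hf ⟨i, by omega⟩).1
    obtain ⟨v, hv, hvL⟩ := hspec m fe hmem
    have hvlen : ∀ i < m, (v i).length = t := fun i hi => (hv i hi).2
    refine ⟨glueWords m fe v, ⟨hvL, glueWords_length m fe v n t hwlen hvlen⟩, ?_⟩
    intro j
    have := glueWords_extract m fe v n t hwlen hvlen j (by omega)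
    rw [this]
    simp only [hfe, dif_pos j.isLt]
  set Gn := (finite_wordsOfLen G n).toFinset with hGn
  set Lf := (finite_wordsOfLen (language X) ((m + 1) * n + m * t)).toFinset with hLf
  set s : Finset (Fin (m + 1) → List (Fin p)) := Fintype.piFinset (fun _ => Gn) with hs
  set Φ : (Fin (m + 1) → List (Fin p)) → List (Fin p) := fun f =>
    if hf : ∀ i, f i ∈ wordsOfLen G n then (key f hf).choose else [] with hΦ
  have hcard : s.card = (wordsOfLen G n).ncard ^ (m + 1) := by
    rw [hs, Fintype.card_piFinset]
    simp [hGn, Set.ncard_eq_toFinset_card _ (finite_wordsOfLen G n)]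
  have hmem : ∀ f ∈ s, Φ f ∈ Lf := by
    intro f hfs
    have hf : ∀ i, f i ∈ wordsOfLen G n := by
      intro i
      have := Fintype.mem_piFinset.1 hfs i
      rwa [hGn, Set.Finite.mem_toFinset] at this
    simp only [hΦ, dif_pos hf, hLf, Set.Finite.mem_toFinset]
    exact (key f hf).choose_spec.1
  have hinj : Set.InjOn Φ s := by
    intro f hfs f' hfs' hff
    have hf : ∀ i, f i ∈ wordsOfLen G n := by
      intro i
      have := Fintype.mem_piFinset.1 hfs i
      rwa [hGn, Set.Finite.mem_toFinset] at this
    have hf' : ∀ i, f' i ∈ wordsOfLen G n := by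
      intro i
      have := Fintype.mem_piFinset.1 hfs' i
      rwa [hGn, Set.Finite.mem_toFinset] at this
    simp only [hΦ, dif_pos hf, dif_pos hf'] at hff
    funext j
    rw [← (key f hf).choose_spec.2 j, ← (key f' hf').choose_spec.2 j, hff]
  have := Finset.card_le_card_of_injOn Φ hmem hinj
  rw [hcard] at this
  rwa [hLf, ← Set.ncard_eq_toFinset_card _ (finite_wordsOfLen (language X) _)] at this

lemma ncard_G_le_exp (hX : X.Nonempty) {G : Set (List (Fin p))} {t : ℕ}
    (hspec : HasSpecS (language X) G t) (n : ℕ) :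
    ((wordsOfLen G n).ncard : ℝ) ≤ Real.exp (((n : ℝ) + t) * htop X) := by
  rcases Nat.eq_zero_or_pos (n + t) with h0 | hpos
  · have hn : n = 0 := by omega
    have ht : t = 0 := by omega
    subst hn; subst ht
    have hsub : wordsOfLen G 0 ⊆ {([] : List (Fin p))} := by
      intro w hw
      simp only [Set.mem_singleton_iff]
      exact List.length_eq_zero_iff.mp hw.2
    have := Set.ncard_le_ncard hsub (Set.finite_singleton _)
    rw [Set.ncard_singleton] at this
    have h1 : ((wordsOfLen G 0).ncard : ℝ) ≤ 1 := by exact_mod_cast this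
    simpa using h1
  · rcases Nat.eq_zero_or_pos (wordsOfLen G n).ncard with hg0 | hg
    · rw [hg0]
      simp only [Nat.cast_zero]
      exact (Real.exp_pos _).le
    · set g := (wordsOfLen G n).ncard with hgdef
      have key : ∀ m : ℕ, ((m : ℝ) + 1) * Real.log g ≤ uL X ((m + 1) * (n + t)) := by
        intro m
        have h1 : g ^ (m + 1) ≤ (wordsOfLen (language X) ((m + 1) * n + m * t)).ncard :=
          pow_le_ncard_L_of_spec hspec n m
        have h2 : (wordsOfLen (language X) ((m + 1) * n + m * t)).ncard ≤
            (wordsOfLen (language X) ((m + 1) * (n + t))).ncard := by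
          apply ncard_L_monotone
          have : (m + 1) * (n + t) = (m + 1) * n + m * t + t := by ring
          omega
        have h3 : (g : ℝ) ^ (m + 1) ≤ ((wordsOfLen (language X) ((m + 1) * (n + t))).ncard : ℝ) := by
          exact_mod_cast le_trans h1 h2
        have h4 : (0 : ℝ) < (g : ℝ) ^ (m + 1) := by positivity
        calc ((m : ℝ) + 1) * Real.log g = Real.log ((g : ℝ) ^ (m + 1)) := by
              rw [Real.log_pow]; push_cast; ring
          _ ≤ uL X ((m + 1) * (n + t)) := Real.log_le_log h4 h3
      have hphi : Tendsto (fun m : ℕ => (m + 1) * (n + t)) atTop atTop := by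
        apply StrictMono.tendsto_atTop
        intro a b hab
        exact (Nat.mul_lt_mul_right hpos).mpr (by omega)
      have htld : Tendsto (fun m : ℕ =>
          uL X ((m + 1) * (n + t)) / (((m + 1) * (n + t) : ℕ) : ℝ)) atTop (𝓝 (htop X)) :=
        (tendsto_uL_div hX).comp hphi
      have hterm : ∀ m : ℕ, Real.log g / ((n : ℝ) + t) ≤
          uL X ((m + 1) * (n + t)) / (((m + 1) * (n + t) : ℕ) : ℝ) := by
        intro m
        have hp1 : (0 : ℝ) < (n : ℝ) + t := by exact_mod_cast hpos
        have hp2 : (0 : ℝ) < ((m : ℝ) + 1) := by positivity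
        rw [div_le_div_iff₀ hp1 (by push_cast; positivity)]
        have := key m
        have hcast : ((((m + 1) * (n + t) : ℕ)) : ℝ) = ((m : ℝ) + 1) * ((n : ℝ) + t) := by
          push_cast; ring
        rw [hcast]
        calc Real.log g * (((m : ℝ) + 1) * ((n : ℝ) + t)) =
              (((m : ℝ) + 1) * Real.log g) * ((n : ℝ) + t) := by ring
          _ ≤ uL X ((m + 1) * (n + t)) * ((n : ℝ) + t) := by
              apply mul_le_mul_of_nonneg_right (key m) (le_of_lt hp1)
      have hfin : Real.log g / ((n : ℝ) + t) ≤ htop X :=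
        ge_of_tendsto htld (Filter.Eventually.of_forall hterm)
      have hp1 : (0 : ℝ) < (n : ℝ) + t := by exact_mod_cast hpos
      rw [div_le_iff₀ hp1] at hfin
      have hgpos : (0 : ℝ) < (g : ℝ) := by exact_mod_cast hg
      calc (g : ℝ) = Real.exp (Real.log g) := (Real.exp_log hgpos).symm
        _ ≤ Real.exp (((n : ℝ) + t) * htop X) := by
            apply Real.exp_le_exp.2
            rw [mul_comm] at hfin
            exact hfin

end Glue

/-! ### Decomposition counting -/

section Decomposition

variable {p : ℕ} {X : Set (FullShift p)}

lemma ncard_L_le_sum_decomp {Cp G Cs : Set (List (Fin p))}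
    (hdec : Decomp (language X) Cp G Cs) (n : ℕ) :
    (wordsOfLen (language X) n).ncard ≤
      ∑ ik ∈ (Finset.range (n + 1) ×ˢ Finset.range (n + 1)).filter
          (fun ik => ik.1 + ik.2 ≤ n),
        (wordsOfLen Cp ik.1).ncard *
          ((wordsOfLen G (n - ik.1 - ik.2)).ncard * (wordsOfLen Cs ik.2).ncard) := by
  classical
  choose u v x hu hv hx heq using hdec.2.2.2
  set g : List (Fin p) → ℕ × ℕ := fun w =>
    if hw : w ∈ language X then ((u w hw).length, (x w hw).length) else (0, 0) with hg
  set Lf := (finite_wordsOfLen (language X) n).toFinset with hLf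
  set T := (Finset.range (n + 1) ×ˢ Finset.range (n + 1)).filter
    (fun ik => ik.1 + ik.2 ≤ n) with hT
  have hlen : ∀ w (hw : w ∈ language X),
      (u w hw).length + (v w hw).length + (x w hw).length = w.length := by
    intro w hw
    conv_rhs => rw [heq w hw]
    simp [List.length_append]
    ring
  have hmemT : ∀ w ∈ Lf, g w ∈ T := by
    intro w hwf
    rw [hLf, Set.Finite.mem_toFinset] at hwf
    have hw : w ∈ language X := hwf.1
    have hl := hlen w hw
    rw [hwf.2] at hl
    simp only [hg, dif_pos hw, hT, Finset.mem_filter, Finset.mem_product, Finset.mem_range]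
    omega
  have hfiber := Finset.card_eq_sum_card_fiberwise hmemT
  have hle : ∀ ik ∈ T, (Lf.filter (fun w => g w = ik)).card ≤
      (wordsOfLen Cp ik.1).ncard *
        ((wordsOfLen G (n - ik.1 - ik.2)).ncard * (wordsOfLen Cs ik.2).ncard) := by
    rintro ⟨i, k⟩ hik
    set F : List (Fin p) → List (Fin p) × (List (Fin p) × List (Fin p)) := fun w =>
      if hw : w ∈ language X then (u w hw, (v w hw, x w hw)) else ([], ([], [])) with hF
    have key : ∀ w ∈ Lf.filter (fun w => g w = (i, k)),
        ∃ (hw : w ∈ language X), (u w hw).length = i ∧ (x w hw).length = k ∧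
          (v w hw).length = n - i - k ∧ F w = (u w hw, (v w hw, x w hw)) := by
      intro w hwf
      rw [Finset.mem_filter, hLf, Set.Finite.mem_toFinset] at hwf
      obtain ⟨⟨hw, hwn⟩, hgw⟩ := hwf
      simp only [hg, dif_pos hw, Prod.mk.injEq] at hgw
      have hl := hlen w hw
      rw [hwn] at hl
      exact ⟨hw, hgw.1, hgw.2, by omega, by simp [hF, dif_pos hw]⟩
    have := Finset.card_le_card_of_injOn (s := Lf.filter (fun w => g w = (i, k))) F (t :=
        (finite_wordsOfLen Cp i).toFinset ×ˢ
          ((finite_wordsOfLen G (n - i - k)).toFinset ×ˢ (finite_wordsOfLen Cs k).toFinset))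
      ?_ ?_
    · rwa [Finset.card_product, Finset.card_product,
        ← Set.ncard_eq_toFinset_card _ (finite_wordsOfLen Cp i),
        ← Set.ncard_eq_toFinset_card _ (finite_wordsOfLen G (n - i - k)),
        ← Set.ncard_eq_toFinset_card _ (finite_wordsOfLen Cs k)] at this
    · intro w hwf
      obtain ⟨hw, h1, h2, h3, h4⟩ := key w hwf
      rw [h4]
      simp only [Finset.mem_coe, Finset.mem_product, Set.Finite.mem_toFinset]
      exact ⟨⟨hu w hw, h1⟩, ⟨hv w hw, h3⟩, ⟨hx w hw, h2⟩⟩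
    · intro w hwf w' hwf' hFF
      obtain ⟨hw, _, _, _, h4⟩ := key w hwf
      obtain ⟨hw', _, _, _, h4'⟩ := key w' hwf'
      rw [h4, h4'] at hFF
      simp only [Prod.mk.injEq] at hFF
      rw [heq w hw, heq w' hw', hFF.1, hFF.2.1, hFF.2.2]
  calc (wordsOfLen (language X) n).ncard = Lf.card := by
        rw [hLf, ← Set.ncard_eq_toFinset_card _ (finite_wordsOfLen (language X) n)]
    _ = ∑ ik ∈ T, (Lf.filter (fun w => g w = ik)).card := hfiber
    _ ≤ _ := Finset.sum_le_sum hle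

lemma exists_C2 (hX : IsShiftSpace X) {Cp G Cs : Set (List (Fin p))}
    (hdec : Decomp (language X) Cp G Cs)
    (hI : ∃ t : ℕ, HasSpecS (language X) G t)
    (hII : growth (Cp ∪ Cs) < htop X) :
    ∃ C2 : ℝ, 1 ≤ C2 ∧ ∀ n : ℕ,
      ((wordsOfLen (language X) n).ncard : ℝ) ≤ C2 * Real.exp ((n : ℝ) * htop X) := by
  classical
  obtain ⟨t, hspec⟩ := hI
  obtain ⟨x0, hx0⟩ := hX.1
  have hp : 1 ≤ p := (x0 0).pos
  have hp1 : (1 : ℝ) ≤ (p : ℝ) := by exact_mod_cast hp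
  set h := htop X with hh
  set h'' := (growth (Cp ∪ Cs) + h) / 2 with hh''
  have hlt1 : growth (Cp ∪ Cs) < h'' := by rw [hh'']; linarith
  have hlt2 : h'' < h := by rw [hh'']; linarith
  -- eventual bound on the prefix/suffix collection
  have hlogbound : ∀ (D : Set (List (Fin p))) (i : ℕ),
      Real.log ((wordsOfLen D i).ncard) ≤ (i : ℝ) * Real.log p := by
    intro D i
    rcases Nat.eq_zero_or_pos (wordsOfLen D i).ncard with h0 | hpos
    · rw [h0]
      simp only [Nat.cast_zero, Real.log_zero]
      positivity
    · have hle : ((wordsOfLen D i).ncard : ℝ) ≤ (p : ℝ) ^ i := by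
        have := ncard_wordsOfLen_le_pow D i
        push_cast
        exact_mod_cast this
      calc Real.log ((wordsOfLen D i).ncard) ≤ Real.log ((p : ℝ) ^ i) :=
            Real.log_le_log (by exact_mod_cast hpos) hle
        _ = (i : ℝ) * Real.log p := by rw [Real.log_pow]
  have hbdd : Filter.IsBoundedUnder (· ≤ ·) atTop
      (fun n : ℕ => Real.log ((wordsOfLen (Cp ∪ Cs) n).ncard) / n) := by
    refine ⟨Real.log p, Filter.eventually_map.2 (Filter.Eventually.of_forall fun i => ?_)⟩
    rcases Nat.eq_zero_or_pos i with rfl | hi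
    · simp only [Nat.cast_zero, div_zero]
      exact Real.log_nonneg hp1
    · rw [div_le_iff₀ (by exact_mod_cast hi)]
      calc Real.log ((wordsOfLen (Cp ∪ Cs) i).ncard) ≤ (i : ℝ) * Real.log p :=
            hlogbound _ i
        _ = Real.log p * i := by ring
  have hev : ∀ᶠ i in atTop,
      Real.log ((wordsOfLen (Cp ∪ Cs) i).ncard) / i < h'' :=
    Filter.eventually_lt_of_limsup_lt hlt1 hbdd
  obtain ⟨N₀, hN₀⟩ := Filter.eventually_atTop.1 hev
  set C' := (p : ℝ) ^ (N₀ + 1) * Real.exp ((N₀ + 1) * |h''|) with hC'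
  have hC'1 : 1 ≤ C' := by
    rw [hC']
    have h1 : (1 : ℝ) ≤ (p : ℝ) ^ (N₀ + 1) := one_le_pow₀ hp1
    have h2 : (1 : ℝ) ≤ Real.exp ((N₀ + 1) * |h''|) := by
      rw [Real.one_le_exp_iff]
      positivity
    nlinarith
  have hCC : ∀ i : ℕ, ((wordsOfLen (Cp ∪ Cs) i).ncard : ℝ) ≤ C' * Real.exp (i * h'') := by
    intro i
    rcases lt_or_ge i (N₀ + 1) with hi | hi
    · have h1 : ((wordsOfLen (Cp ∪ Cs) i).ncard : ℝ) ≤ (p : ℝ) ^ (N₀ + 1) := by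
        calc ((wordsOfLen (Cp ∪ Cs) i).ncard : ℝ) ≤ (p : ℝ) ^ i := by
              exact_mod_cast ncard_wordsOfLen_le_pow (Cp ∪ Cs) i
          _ ≤ (p : ℝ) ^ (N₀ + 1) := pow_le_pow_right₀ hp1 (by omega)
      have h2 : (0 : ℝ) ≤ (N₀ + 1) * |h''| + i * h'' := by
        have : (i : ℝ) * |h''| ≤ ((N₀ : ℝ) + 1) * |h''| := by
          apply mul_le_mul_of_nonneg_right _ (abs_nonneg _)
          exact_mod_cast Nat.le_of_lt_succ (by omega)
        have habs : -((i : ℝ) * |h''|) ≤ i * h'' := by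
          rw [← mul_neg]
          apply mul_le_mul_of_nonneg_left (neg_abs_le h'') (Nat.cast_nonneg i)
        push_cast at this ⊢
        linarith
      calc ((wordsOfLen (Cp ∪ Cs) i).ncard : ℝ) ≤ (p : ℝ) ^ (N₀ + 1) := h1
        _ = (p : ℝ) ^ (N₀ + 1) * (Real.exp ((N₀ + 1) * |h''|) * Real.exp (-((N₀ + 1) * |h''|))) := by
            rw [← Real.exp_add]
            simp
        _ ≤ (p : ℝ) ^ (N₀ + 1) * (Real.exp ((N₀ + 1) * |h''|) * Real.exp (i * h'')) := by
            apply mul_le_mul_of_nonneg_left _ (by positivity)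
            apply mul_le_mul_of_nonneg_left _ (by positivity)
            apply Real.exp_le_exp.2
            linarith
        _ = C' * Real.exp (i * h'') := by rw [hC']; ring
    · rcases Nat.eq_zero_or_pos (wordsOfLen (Cp ∪ Cs) i).ncard with h0 | hpos
      · rw [h0]
        simp only [Nat.cast_zero]
        positivity
      · have hi1 : 1 ≤ i := by omega
        have := hN₀ i (by omega)
        rw [div_lt_iff₀ (by exact_mod_cast hi1)] at this
        have hlog : Real.log ((wordsOfLen (Cp ∪ Cs) i).ncard) ≤ (i : ℝ) * h'' := by
          calc Real.log ((wordsOfLen (Cp ∪ Cs) i).ncard) ≤ h'' * i := le_of_lt this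
            _ = (i : ℝ) * h'' := by ring
        calc ((wordsOfLen (Cp ∪ Cs) i).ncard : ℝ) =
              Real.exp (Real.log ((wordsOfLen (Cp ∪ Cs) i).ncard)) := by
              rw [Real.exp_log (by exact_mod_cast hpos)]
          _ ≤ Real.exp ((i : ℝ) * h'') := Real.exp_le_exp.2 hlog
          _ ≤ C' * Real.exp ((i : ℝ) * h'') := le_mul_of_one_le_left (Real.exp_pos _).le hC'1
  have hCp : ∀ i : ℕ, ((wordsOfLen Cp i).ncard : ℝ) ≤ C' * Real.exp (i * h'') := by
    intro i
    refine le_trans ?_ (hCC i)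
    have : (wordsOfLen Cp i).ncard ≤ (wordsOfLen (Cp ∪ Cs) i).ncard :=
      Set.ncard_le_ncard (fun w hw => ⟨Set.mem_union_left _ hw.1, hw.2⟩)
        (finite_wordsOfLen _ _)
    exact_mod_cast this
  have hCs : ∀ i : ℕ, ((wordsOfLen Cs i).ncard : ℝ) ≤ C' * Real.exp (i * h'') := by
    intro i
    refine le_trans ?_ (hCC i)
    have : (wordsOfLen Cs i).ncard ≤ (wordsOfLen (Cp ∪ Cs) i).ncard :=
      Set.ncard_le_ncard (fun w hw => ⟨Set.mem_union_right _ hw.1, hw.2⟩)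
        (finite_wordsOfLen _ _)
    exact_mod_cast this
  have hGb : ∀ j : ℕ, ((wordsOfLen G j).ncard : ℝ) ≤ Real.exp (((j : ℝ) + t) * h) :=
    fun j => ncard_G_le_exp hX.1 hspec j
  set r := Real.exp (h'' - h) with hr
  have hr0 : 0 < r := Real.exp_pos _
  have hr1 : r < 1 := by
    rw [hr, Real.exp_lt_one_iff]
    linarith
  have hgeom : ∀ nn : ℕ, ∑ i ∈ Finset.range nn, r ^ i ≤ (1 - r)⁻¹ := by
    intro nn
    have hsummable : Summable (fun i : ℕ => r ^ i) :=
      summable_geometric_of_lt_one hr0.le hr1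
    calc ∑ i ∈ Finset.range nn, r ^ i ≤ ∑' i : ℕ, r ^ i :=
          Summable.sum_le_tsum (Finset.range nn) (fun i _ => by positivity) hsummable
      _ = (1 - r)⁻¹ := tsum_geometric_of_lt_one hr0.le hr1
  refine ⟨max (C' ^ 2 * Real.exp (t * h) * ((1 - r)⁻¹) ^ 2) 1, le_max_right _ _, fun n => ?_⟩
  have hterm : ∀ ik ∈ (Finset.range (n + 1) ×ˢ Finset.range (n + 1)).filter
      (fun ik => ik.1 + ik.2 ≤ n),
      ((wordsOfLen Cp ik.1).ncard : ℝ) *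
        (((wordsOfLen G (n - ik.1 - ik.2)).ncard : ℝ) * ((wordsOfLen Cs ik.2).ncard : ℝ)) ≤
      (C' ^ 2 * Real.exp (t * h) * Real.exp (n * h)) * (r ^ ik.1 * r ^ ik.2) := by
    rintro ⟨i, k⟩ hik
    simp only [Finset.mem_filter, Finset.mem_product, Finset.mem_range] at hik
    obtain ⟨-, hikn⟩ := hik
    have hcast : ((n - i - k : ℕ) : ℝ) = (n : ℝ) - i - k := by
      have hn : (n - i - k) + (i + k) = n := by omega
      have := congrArg (fun m : ℕ => (m : ℝ)) hn
      push_cast at this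
      linarith
    have hprod : (C' * Real.exp (i * h'')) *
        (Real.exp ((((n - i - k : ℕ) : ℝ) + t) * h) * (C' * Real.exp (k * h''))) =
        (C' ^ 2 * Real.exp (t * h) * Real.exp (n * h)) * (r ^ i * r ^ k) := by
      rw [hr, ← Real.exp_nat_mul, ← Real.exp_nat_mul, hcast]
      have e1 : C' * Real.exp (i * h'') *
          (Real.exp (((n : ℝ) - i - k + t) * h) * (C' * Real.exp (k * h''))) =
          C' ^ 2 * Real.exp ((i : ℝ) * h'' + ((((n : ℝ) - i - k + t) * h) + k * h'')) := by
        rw [Real.exp_add, Real.exp_add]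
        ring
      have e2 : C' ^ 2 * Real.exp (t * h) * Real.exp ((n : ℝ) * h) *
          (Real.exp ((i : ℕ) * (h'' - h)) * Real.exp ((k : ℕ) * (h'' - h))) =
          C' ^ 2 * Real.exp ((t : ℝ) * h + ((n : ℝ) * h +
            (((i : ℕ) : ℝ) * (h'' - h) + ((k : ℕ) : ℝ) * (h'' - h)))) := by
        rw [Real.exp_add, Real.exp_add, Real.exp_add]
        ring
      rw [e1]
      rw [show (C' ^ 2 * Real.exp (t * h) * Real.exp ((n:ℝ) * h)) *
          (Real.exp ((i:ℕ) * (h'' - h)) * Real.exp ((k:ℕ) * (h'' - h))) =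
          C' ^ 2 * Real.exp (t * h) * Real.exp ((n:ℝ) * h) *
          (Real.exp ((i:ℕ) * (h'' - h)) * Real.exp ((k:ℕ) * (h'' - h))) from by ring, e2]
      congr 1
      ring
    calc ((wordsOfLen Cp i).ncard : ℝ) *
          (((wordsOfLen G (n - i - k)).ncard : ℝ) * ((wordsOfLen Cs k).ncard : ℝ)) ≤
        (C' * Real.exp (i * h'')) *
          (Real.exp ((((n - i - k : ℕ) : ℝ) + t) * h) * (C' * Real.exp (k * h''))) := by
          apply mul_le_mul (hCp i) _ (by positivity) (by positivity)
          apply mul_le_mul (hGb _) (hCs k) (Nat.cast_nonneg _) (Real.exp_pos _).le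
      _ = _ := hprod
  have hstep1 : ((wordsOfLen (language X) n).ncard : ℝ) ≤
      ∑ ik ∈ (Finset.range (n + 1) ×ˢ Finset.range (n + 1)).filter
          (fun ik => ik.1 + ik.2 ≤ n),
        ((wordsOfLen Cp ik.1).ncard : ℝ) *
          (((wordsOfLen G (n - ik.1 - ik.2)).ncard : ℝ) * ((wordsOfLen Cs ik.2).ncard : ℝ)) := by
    have := ncard_L_le_sum_decomp hdec n
    calc ((wordsOfLen (language X) n).ncard : ℝ) ≤
        ((∑ ik ∈ (Finset.range (n + 1) ×ˢ Finset.range (n + 1)).filter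
            (fun ik => ik.1 + ik.2 ≤ n),
          (wordsOfLen Cp ik.1).ncard *
            ((wordsOfLen G (n - ik.1 - ik.2)).ncard * (wordsOfLen Cs ik.2).ncard) : ℕ) : ℝ) := by
          exact_mod_cast this
      _ = _ := by push_cast; ring
  calc ((wordsOfLen (language X) n).ncard : ℝ) ≤ _ := hstep1
    _ ≤ ∑ ik ∈ (Finset.range (n + 1) ×ˢ Finset.range (n + 1)).filter
          (fun ik => ik.1 + ik.2 ≤ n),
        (C' ^ 2 * Real.exp (t * h) * Real.exp (n * h)) * (r ^ ik.1 * r ^ ik.2) :=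
        Finset.sum_le_sum hterm
    _ ≤ ∑ ik ∈ Finset.range (n + 1) ×ˢ Finset.range (n + 1),
        (C' ^ 2 * Real.exp (t * h) * Real.exp (n * h)) * (r ^ ik.1 * r ^ ik.2) := by
        apply Finset.sum_le_sum_of_subset_of_nonneg (Finset.filter_subset _ _)
        intro ik _ _
        positivity
    _ = (C' ^ 2 * Real.exp (t * h) * Real.exp (n * h)) *
        ((∑ i ∈ Finset.range (n + 1), r ^ i) * (∑ k ∈ Finset.range (n + 1), r ^ k)) := by
        rw [← Finset.mul_sum]
        congr 1
        rw [Finset.sum_mul_sum]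
        rw [Finset.sum_product]
    _ ≤ (C' ^ 2 * Real.exp (t * h) * Real.exp (n * h)) * ((1 - r)⁻¹ * (1 - r)⁻¹) := by
        apply mul_le_mul_of_nonneg_left _ (by positivity)
        have h1 := hgeom (n + 1)
        have hinv : (0 : ℝ) < (1 - r)⁻¹ := by
          apply inv_pos.2
          linarith
        apply mul_le_mul h1 h1 (by positivity) hinv.le
    _ ≤ max (C' ^ 2 * Real.exp (t * h) * ((1 - r)⁻¹) ^ 2) 1 * Real.exp ((n : ℝ) * h) := by
        have : (C' ^ 2 * Real.exp (t * h) * Real.exp (n * h)) * ((1 - r)⁻¹ * (1 - r)⁻¹) =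
            (C' ^ 2 * Real.exp (t * h) * ((1 - r)⁻¹) ^ 2) * Real.exp ((n : ℝ) * h) := by
          ring
        rw [this]
        apply mul_le_mul_of_nonneg_right (le_max_left _ _) (Real.exp_pos _).le

end Decomposition

/-! ### Entropy machinery -/

section Entropy

variable {p : ℕ}

/-- The cylinder determined by a pattern, based at `0`. -/
def patCyl (n : ℕ) (w : Fin n → Fin p) : Set (FullShift p) :=
  {x : FullShift p | ∀ i : Fin n, x ((i : ℕ) : ℤ) = w i}

lemma measurableSet_patCyl (n : ℕ) (w : Fin n → Fin p) : MeasurableSet (patCyl n w) := by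
  have : patCyl n w = ⋂ i : Fin n, (fun x : FullShift p => x ((i : ℕ) : ℤ)) ⁻¹' {w i} := by
    ext x
    simp [patCyl, Set.mem_iInter]
  rw [this]
  exact MeasurableSet.iInter fun i => (measurable_pi_apply _) (measurableSet_singleton _)

lemma patCyl_disjoint (n : ℕ) : Pairwise (Function.onFun Disjoint (patCyl (p := p) n)) := by
  intro w w' hww
  rw [Function.onFun, Set.disjoint_left]
  intro x hx hx'
  apply hww
  funext i
  rw [← hx i, ← hx' i]

lemma iUnion_patCyl (n : ℕ) : ⋃ w : Fin n → Fin p, patCyl n w = Set.univ := by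
  ext x
  simp only [Set.mem_iUnion, Set.mem_univ, iff_true]
  exact ⟨fun i => x ((i : ℕ) : ℤ), fun i => rfl⟩

lemma sum_toReal_measure_partition {B : Type*} [Fintype B] (μ : Measure (FullShift p))
    [IsFiniteMeasure μ] (g : B → Set (FullShift p)) (hmeas : ∀ b, MeasurableSet (g b))
    (hdisj : Pairwise (Function.onFun Disjoint g)) (hcover : ⋃ b, g b = Set.univ)
    (A : Set (FullShift p)) (hA : MeasurableSet A) :
    ∑ b, (μ (A ∩ g b)).toReal = (μ A).toReal := by
  have h1 : A = ⋃ b, A ∩ g b := by rw [← Set.inter_iUnion, hcover, Set.inter_univ]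
  have h2 : μ A = ∑ b, μ (A ∩ g b) := by
    conv_lhs => rw [h1]
    rw [measure_iUnion
      (fun b b' hbb => (hdisj hbb).mono Set.inter_subset_right Set.inter_subset_right)
      (fun b => hA.inter (hmeas b)), tsum_fintype]
  rw [h2, ENNReal.toReal_sum (fun b _ => measure_ne_top μ _)]

/-- `H_n(μ)`, the entropy of the partition into cylinders of length `n`. -/
noncomputable def Hn (μ : Measure (FullShift p)) (n : ℕ) : ℝ :=
  ∑ w : Fin n → Fin p,
    Real.negMulLog (μ {x : FullShift p | ∀ i : Fin n, x ((i : ℕ) : ℤ) = w i}).toReal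

lemma Hn_eq (μ : Measure (FullShift p)) (n : ℕ) :
    Hn μ n = ∑ w : Fin n → Fin p, Real.negMulLog (μ (patCyl n w)).toReal := rfl

lemma entropyOf_eq_liminf (μ : Measure (FullShift p)) :
    entropyOf μ = Filter.atTop.liminf fun n : ℕ => Hn μ n / n := rfl

lemma negMulLog_le_aux {P Q : ℝ} (hP : 0 ≤ P) (hQ : 0 ≤ Q) (h : P ≠ 0 → Q ≠ 0) :
    Real.negMulLog P ≤ P * (-Real.log Q) + Q - P := by
  rcases eq_or_lt_of_le hP with h0 | hP0
  · rw [← h0]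
    simp only [Real.negMulLog_zero, zero_mul, zero_add, sub_zero]
    linarith
  · have hQ0 : 0 < Q := lt_of_le_of_ne hQ (Ne.symm (h hP0.ne'))
    have hlog := Real.log_le_sub_one_of_pos (div_pos hQ0 hP0)
    rw [Real.log_div hQ0.ne' hP0.ne'] at hlog
    have hmul := mul_le_mul_of_nonneg_left hlog hP0.le
    have hPQ : P * (Q / P - 1) = Q - P := by field_simp
    rw [Real.negMulLog]
    nlinarith

lemma sum_negMulLog_le_of_sum {ι : Type*} (s : Finset ι) (q : ι → ℝ)
    (hq : ∀ i ∈ s, 0 ≤ q i) :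
    ∑ i ∈ s, Real.negMulLog (q i) ≤
      (∑ i ∈ s, q i) * Real.log s.card + Real.negMulLog (∑ i ∈ s, q i) := by
  rcases eq_or_lt_of_le (Finset.sum_nonneg hq) with hS0 | hS
  · have hz : ∀ i ∈ s, q i = 0 := (Finset.sum_eq_zero_iff_of_nonneg hq).1 hS0.symm
    have h1 : ∑ i ∈ s, Real.negMulLog (q i) = 0 := by
      apply Finset.sum_eq_zero
      intro i hi
      rw [hz i hi, Real.negMulLog_zero]
    rw [h1, ← hS0]
    simp
  · have hsne : s.Nonempty := by
      by_contra hcon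
      rw [Finset.not_nonempty_iff_eq_empty.1 hcon] at hS
      simp at hS
    have hcard : (0 : ℝ) < s.card := by exact_mod_cast Finset.card_pos.2 hsne
    set S := ∑ i ∈ s, q i with hSdef
    set Q0 := S / s.card with hQ0
    have hQ0pos : 0 < Q0 := div_pos hS hcard
    calc ∑ i ∈ s, Real.negMulLog (q i) ≤
        ∑ i ∈ s, (q i * (-Real.log Q0) + Q0 - q i) := by
          apply Finset.sum_le_sum
          intro i hi
          exact negMulLog_le_aux (hq i hi) hQ0pos.le (fun _ => hQ0pos.ne')
      _ = S * (-Real.log Q0) + s.card * Q0 - S := by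
          rw [Finset.sum_sub_distrib, Finset.sum_add_distrib, ← Finset.sum_mul,
            Finset.sum_const, nsmul_eq_mul]
      _ = S * Real.log s.card + Real.negMulLog S := by
          rw [hQ0, Real.log_div hS.ne' hcard.ne', Real.negMulLog]
          field_simp
          ring

lemma sum_sum_negMulLog_le {A B : Type*} [Fintype A] [Fintype B] (P : A → B → ℝ)
    (hP : ∀ a b, 0 ≤ P a b) (hsum : ∑ a, ∑ b, P a b = 1) :
    ∑ a, ∑ b, Real.negMulLog (P a b) ≤
      (∑ a, Real.negMulLog (∑ b, P a b)) + ∑ b, Real.negMulLog (∑ a, P a b) := by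
  classical
  set r : A → ℝ := fun a => ∑ b, P a b with hrdef
  set c : B → ℝ := fun b => ∑ a, P a b with hcdef
  have hr : ∀ a, 0 ≤ r a := fun a => Finset.sum_nonneg fun b _ => hP a b
  have hc : ∀ b, 0 ≤ c b := fun b => Finset.sum_nonneg fun a _ => hP a b
  have hPr : ∀ a b, P a b ≤ r a := fun a b =>
    Finset.single_le_sum (fun b' _ => hP a b') (Finset.mem_univ b)
  have hPc : ∀ a b, P a b ≤ c b := fun a b =>
    Finset.single_le_sum (fun a' _ => hP a' b) (Finset.mem_univ a)
  have hRsum : ∑ a, r a = 1 := hsum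
  have hCsum : ∑ b, c b = 1 := by
    have hcomm : ∑ b, c b = ∑ a, r a := Finset.sum_comm
    rw [hcomm]
    exact hsum
  have hsplit : ∀ a b, P a b * (-Real.log (r a * c b)) =
      P a b * (-Real.log (r a)) + P a b * (-Real.log (c b)) := by
    intro a b
    rcases eq_or_ne (P a b) 0 with h0 | h0
    · simp [h0]
    · have hrpos : r a ≠ 0 := by
        have := lt_of_lt_of_le (lt_of_le_of_ne (hP a b) (Ne.symm h0)) (hPr a b)
        exact this.ne'
      have hcpos : c b ≠ 0 := by
        have := lt_of_lt_of_le (lt_of_le_of_ne (hP a b) (Ne.symm h0)) (hPc a b)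
        exact this.ne'
      rw [Real.log_mul hrpos hcpos]
      ring
  have key : ∀ a b, Real.negMulLog (P a b) ≤
      P a b * (-Real.log (r a)) + P a b * (-Real.log (c b)) + (r a * c b - P a b) := by
    intro a b
    have h1 := negMulLog_le_aux (hP a b) (mul_nonneg (hr a) (hc b)) (fun h0 => by
      have hrpos : (0:ℝ) < r a := lt_of_lt_of_le (lt_of_le_of_ne (hP a b) (Ne.symm h0)) (hPr a b)
      have hcpos : (0:ℝ) < c b := lt_of_lt_of_le (lt_of_le_of_ne (hP a b) (Ne.symm h0)) (hPc a b)
      positivity)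
    have h2 := hsplit a b
    linarith
  have e1 : ∀ a, ∑ b, P a b * (-Real.log (r a)) = Real.negMulLog (r a) := by
    intro a
    rw [← Finset.sum_mul]
    simp only [Real.negMulLog, ← hrdef]
    ring
  have e2 : ∑ a, ∑ b, P a b * (-Real.log (c b)) = ∑ b, Real.negMulLog (c b) := by
    rw [Finset.sum_comm]
    apply Finset.sum_congr rfl
    intro b _
    rw [← Finset.sum_mul]
    simp only [Real.negMulLog, ← hcdef]
    ring
  have e3 : ∑ a, ∑ b, (r a * c b) = 1 := by
    have : ∑ a, ∑ b, (r a * c b) = (∑ a, r a) * (∑ b, c b) := by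
      rw [Finset.sum_mul_sum]
    rw [this, hRsum, hCsum, one_mul]
  calc ∑ a, ∑ b, Real.negMulLog (P a b) ≤
      ∑ a, ∑ b, (P a b * (-Real.log (r a)) + P a b * (-Real.log (c b)) +
        (r a * c b - P a b)) := by
        apply Finset.sum_le_sum
        intro a _
        apply Finset.sum_le_sum
        intro b _
        exact key a b
    _ = (∑ a, ∑ b, P a b * (-Real.log (r a))) + (∑ a, ∑ b, P a b * (-Real.log (c b))) +
        ((∑ a, ∑ b, (r a * c b)) - ∑ a, ∑ b, P a b) := by
        simp only [Finset.sum_add_distrib, Finset.sum_sub_distrib]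
    _ = (∑ a, Real.negMulLog (r a)) + (∑ b, Real.negMulLog (c b)) + (1 - 1) := by
        rw [e2, e3, hsum]
        congr 1
        congr 1
        exact Finset.sum_congr rfl fun a _ => e1 a
    _ = (∑ a, Real.negMulLog (r a)) + ∑ b, Real.negMulLog (c b) := by ring

lemma Hn_subadditive (μ : Measure (FullShift p)) [IsProbabilityMeasure μ]
    (hinv : ShiftInvariant μ) : Subadditive (fun n => Hn μ n) := by
  intro m n
  simp only [Hn_eq]
  set e : ((Fin m → Fin p) × (Fin n → Fin p)) ≃ (Fin (m + n) → Fin p) :=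
    (Equiv.sumArrowEquivProdArrow _ _ _).symm.trans
      (Equiv.arrowCongr finSumFinEquiv (Equiv.refl _)) with he
  have hset : ∀ (u : Fin m → Fin p) (v : Fin n → Fin p),
      patCyl (m + n) (e (u, v)) = patCyl m u ∩ (shiftMap^[m] ⁻¹' patCyl n v) := by
    intro u v
    have happ : ∀ j : Fin (m + n), e (u, v) j = Sum.elim u v (finSumFinEquiv.symm j) := by
      intro j
      simp [he, Equiv.sumArrowEquivProdArrow, Equiv.arrowCongr]
    ext y
    simp only [patCyl, Set.mem_setOf_eq, Set.mem_inter_iff, Set.mem_preimage]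
    constructor
    · intro hy
      refine ⟨?_, ?_⟩
      · intro i
        have h1 := hy (Fin.castAdd n i)
        rw [happ] at h1
        rw [finSumFinEquiv_symm_apply_castAdd] at h1
        simpa using h1
      · intro i
        have h1 := hy (Fin.natAdd m i)
        rw [happ] at h1
        rw [finSumFinEquiv_symm_apply_natAdd] at h1
        simp only [Sum.elim_inr, Fin.coe_natAdd] at h1
        rw [shiftMap_iterate]
        rw [← h1]
        congr 1
        push_cast
        ring
    · rintro ⟨h1, h2⟩ j
      rw [happ]
      rcases hj : finSumFinEquiv.symm j with i | i
      · have hji : j = Fin.castAdd n i := by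
          have := congrArg finSumFinEquiv hj
          rwa [Equiv.apply_symm_apply, finSumFinEquiv_apply_left] at this
        rw [hji]
        simpa using h1 i
      · have hji : j = Fin.natAdd m i := by
          have := congrArg finSumFinEquiv hj
          rwa [Equiv.apply_symm_apply, finSumFinEquiv_apply_right] at this
        rw [hji]
        simp only [Sum.elim_inr, Fin.coe_natAdd]
        have h3 := h2 i
        rw [shiftMap_iterate] at h3
        rw [← h3]
        congr 1
        push_cast
        ring
  set P : (Fin m → Fin p) → (Fin n → Fin p) → ℝ :=
    fun u v => (μ (patCyl m u ∩ (shiftMap^[m] ⁻¹' patCyl n v))).toReal with hP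
  have hPnn : ∀ u v, 0 ≤ P u v := fun u v => ENNReal.toReal_nonneg
  -- the shifted cylinders also form a partition
  have hgmeas : ∀ v : Fin n → Fin p, MeasurableSet (shiftMap^[m] ⁻¹' patCyl n v) :=
    fun v => (measurableSet_patCyl n v).preimage (measurable_shiftMap_iterate m)
  have hgdisj : Pairwise (Function.onFun Disjoint
      (fun v : Fin n → Fin p => shiftMap^[m] ⁻¹' patCyl n v)) :=
    fun v v' hvv => Disjoint.preimage _ (patCyl_disjoint n hvv)
  have hgcover : ⋃ v : Fin n → Fin p, shiftMap^[m] ⁻¹' patCyl n v = Set.univ := by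
    rw [← Set.preimage_iUnion, iUnion_patCyl, Set.preimage_univ]
  have hrow : ∀ u, ∑ v, P u v = (μ (patCyl m u)).toReal := fun u =>
    sum_toReal_measure_partition μ _ hgmeas hgdisj hgcover _ (measurableSet_patCyl m u)
  have hcol : ∀ v, ∑ u, P u v = (μ (patCyl n v)).toReal := by
    intro v
    have h1 : ∀ u, patCyl m u ∩ (shiftMap^[m] ⁻¹' patCyl n v) =
        (shiftMap^[m] ⁻¹' patCyl n v) ∩ patCyl m u := fun u => Set.inter_comm _ _
    calc ∑ u, P u v = ∑ u, (μ ((shiftMap^[m] ⁻¹' patCyl n v) ∩ patCyl m u)).toReal := by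
          apply Finset.sum_congr rfl
          intro u _
          show (μ (patCyl m u ∩ shiftMap^[m] ⁻¹' patCyl n v)).toReal = _
          rw [h1 u]
      _ = (μ (shiftMap^[m] ⁻¹' patCyl n v)).toReal :=
          sum_toReal_measure_partition μ _ (measurableSet_patCyl m) (patCyl_disjoint m)
            (iUnion_patCyl m) _ (hgmeas v)
      _ = (μ (patCyl n v)).toReal := by
          rw [hinv.measure_preimage m (measurableSet_patCyl n v)]
  have htot : ∑ u, ∑ v, P u v = 1 := by
    have : ∀ u, ∑ v, P u v = (μ (patCyl m u)).toReal := hrow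
    rw [Finset.sum_congr rfl fun u _ => hrow u]
    have h2 : ∑ u, (μ (Set.univ ∩ patCyl m u)).toReal = (μ (Set.univ : Set (FullShift p))).toReal :=
      sum_toReal_measure_partition μ _ (measurableSet_patCyl m) (patCyl_disjoint m)
        (iUnion_patCyl m) _ MeasurableSet.univ
    simp only [Set.univ_inter] at h2
    rw [h2, measure_univ, ENNReal.toReal_one]
  have hre : ∑ w : Fin (m + n) → Fin p, Real.negMulLog (μ (patCyl (m + n) w)).toReal =
      ∑ u, ∑ v, Real.negMulLog (P u v) := by
    rw [← Equiv.sum_comp e (fun w => Real.negMulLog (μ (patCyl (m + n) w)).toReal),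
      Fintype.sum_prod_type]
    apply Finset.sum_congr rfl
    intro u _
    apply Finset.sum_congr rfl
    intro v _
    rw [hset u v]
  rw [hre]
  have := sum_sum_negMulLog_le P hPnn htot
  calc ∑ u, ∑ v, Real.negMulLog (P u v) ≤
      (∑ u, Real.negMulLog (∑ v, P u v)) + ∑ v, Real.negMulLog (∑ u, P u v) := this
    _ = (∑ u, Real.negMulLog (μ (patCyl m u)).toReal) +
        ∑ v, Real.negMulLog (μ (patCyl n v)).toReal := by
        congr 1
        · exact Finset.sum_congr rfl fun u _ => by rw [hrow u]
        · exact Finset.sum_congr rfl fun v _ => by rw [hcol v]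

lemma Hn_nonneg (μ : Measure (FullShift p)) [IsProbabilityMeasure μ] (n : ℕ) :
    0 ≤ Hn μ n := by
  rw [Hn_eq]
  apply Finset.sum_nonneg
  intro w _
  apply Real.negMulLog_nonneg ENNReal.toReal_nonneg
  have h1 : μ (patCyl n w) ≤ 1 := prob_le_one
  calc (μ (patCyl n w)).toReal ≤ (1 : ℝ≥0∞).toReal :=
      ENNReal.toReal_mono ENNReal.one_ne_top h1
    _ = 1 := ENNReal.toReal_one

lemma n_htop_le_Hn {X : Set (FullShift p)} (ν : Measure (FullShift p))
    (hmme : IsMME X ν) (n : ℕ) : (n : ℝ) * htop X ≤ Hn ν n := by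
  obtain ⟨hprob, hinv, hX1, hent⟩ := hmme
  haveI := hprob
  have hsub : Subadditive (fun k => Hn ν k) := Hn_subadditive ν hinv
  have hbdd : BddBelow (Set.range fun k : ℕ => Hn ν k / k) := by
    refine ⟨0, ?_⟩
    rintro y ⟨k, rfl⟩
    exact div_nonneg (Hn_nonneg ν k) (Nat.cast_nonneg k)
  have hlim : entropyOf ν = hsub.lim := by
    rw [entropyOf_eq_liminf]
    exact (hsub.tendsto_lim hbdd).liminf_eq
  rcases Nat.eq_zero_or_pos n with rfl | hn
  · simpa using Hn_nonneg ν 0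
  · have h1 := hsub.lim_le_div hbdd (n := n) hn.ne'
    rw [← hlim, hent] at h1
    rw [le_div_iff₀ (by exact_mod_cast hn)] at h1
    rw [mul_comm]
    exact h1

end Entropy

/-! ### Final assembly lemmas -/

section Final

variable {p : ℕ}

lemma negMulLog_le_one {x : ℝ} (h0 : 0 ≤ x) (h1 : x ≤ 1) : Real.negMulLog x ≤ 1 := by
  rcases eq_or_lt_of_le h0 with h | hx
  · rw [← h, Real.negMulLog_zero]
    norm_num
  · have hlog : Real.log (1 / x) ≤ 1 / x - 1 := Real.log_le_sub_one_of_pos (by positivity)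
    rw [one_div, Real.log_inv] at hlog
    have h2 := mul_le_mul_of_nonneg_left hlog hx.le
    have h3 : x * (1 / x - 1) = 1 - x := by field_simp
    rw [one_div] at h3
    rw [Real.negMulLog]
    nlinarith

lemma measurableSet_centralCylinder (l : List (Fin p)) :
    MeasurableSet (centralCylinder l) := by
  have : centralCylinder l = ⋂ i : Fin l.length,
      (fun x : FullShift p => x (-((l.length / 2 : ℕ) : ℤ) + (i : ℕ))) ⁻¹' {l.get i} := by
    ext x
    simp [centralCylinder, spellsAt, Set.mem_iInter]
  rw [this]
  exact MeasurableSet.iInter fun i => (measurable_pi_apply _) (measurableSet_singleton _)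

lemma patCyl_eq_preimage (n : ℕ) (w : Fin n → Fin p) :
    patCyl n w = shiftMap^[n / 2] ⁻¹' centralCylinder (List.ofFn w) := by
  have hlen : (List.ofFn w).length = n := List.length_ofFn
  ext x
  simp only [patCyl, Set.mem_setOf_eq, Set.mem_preimage, centralCylinder, spellsAt]
  constructor
  · intro hx i
    rw [shiftMap_iterate, List.get_ofFn]
    have h1 := hx (Fin.cast hlen i)
    rw [← h1]
    congr 1
    simp only [Fin.coe_cast, hlen]
    push_cast
    ring
  · intro hx i
    have h2 := hx (Fin.cast hlen.symm i)
    rw [shiftMap_iterate, List.get_ofFn] at h2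
    have hcast : Fin.cast (List.length_ofFn : (List.ofFn w).length = n) (Fin.cast hlen.symm i) = i := by
      ext
      simp
    rw [hcast] at h2
    rw [← h2]
    congr 1
    simp only [Fin.coe_cast, hlen]
    push_cast
    ring

lemma ofFn_mem_language {X : Set (FullShift p)} {n : ℕ} {w : Fin n → Fin p}
    {x : FullShift p} (hxX : x ∈ X) (hx : x ∈ patCyl n w) :
    List.ofFn w ∈ wordsOfLen (language X) n := by
  have hlen : (List.ofFn w).length = n := List.length_ofFn
  refine ⟨⟨x, hxX, 0, ?_⟩, hlen⟩
  intro i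
  rw [List.get_ofFn]
  have := hx (Fin.cast hlen i)
  rw [← this]
  congr 1
  simp

end Final

/-- **Lemma 5.6.** Under Conditions (I) and (II), for every `γ ∈ (0,1)` there is `C₉ > 0`
such that for every measure of maximal entropy `ν`, every `n`, and every collection
`𝓓_n ⊆ 𝓛_n` whose cylinders have total `ν`-measure at least `γ`, one has
`#𝓓_n ≥ C₉ e^{n h(𝓛)}`. -/
theorem card_of_positive_measure_collection {p : ℕ} (X : Set (FullShift p))
    (hX : IsShiftSpace X) (Cp G Cs : Set (List (Fin p)))
    (hdec : Decomp (language X) Cp G Cs)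
    (hI : ∃ t : ℕ, HasSpecS (language X) G t)
    (hII : growth (Cp ∪ Cs) < htop X)
    (γ : ℝ) (hγ : γ ∈ Set.Ioo (0 : ℝ) 1) :
    ∃ C₉ : ℝ, 0 < C₉ ∧ ∀ ν : MeasureTheory.Measure (FullShift p), IsMME X ν →
      ∀ (n : ℕ) (D : Set (List (Fin p))), D ⊆ wordsOfLen (language X) n →
        ENNReal.ofReal γ ≤ ν (⋃ w ∈ D, centralCylinder w) →
        C₉ * Real.exp ((n : ℝ) * htop X) ≤ (D.ncard : ℝ) := by
  classical
  obtain ⟨C2, hC2_1, hC2⟩ := exists_C2 hX hdec hI hII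
  have hC2pos : (0 : ℝ) < C2 := lt_of_lt_of_le one_pos hC2_1
  have hlogC2 : 0 ≤ Real.log C2 := Real.log_nonneg hC2_1
  obtain ⟨hγ0, hγ1⟩ := hγ
  set K := Real.log C2 + 2 with hK
  have hKpos : 0 < K := by rw [hK]; linarith
  refine ⟨Real.exp (-(K / γ)), Real.exp_pos _, ?_⟩
  intro ν hmme n D hD hmeasγ
  set h := htop X with hh
  have hXne := hX.1
  have hh0 : 0 ≤ h := htop_nonneg hXne
  haveI hprob : IsProbabilityMeasure ν := hmme.1
  have hinv : ShiftInvariant ν := hmme.2.1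
  have hmeasX : MeasurableSet X := hX.2.1.measurableSet
  have hνX : ν X = 1 := hmme.2.2.1
  set f : (Fin n → Fin p) → ℝ := fun w => (ν (patCyl n w)).toReal with hf
  have hfnn : ∀ w, 0 ≤ f w := fun w => ENNReal.toReal_nonneg
  set Df : Finset (Fin n → Fin p) := Finset.univ.filter (fun w => List.ofFn w ∈ D) with hDf
  set Cf : Finset (Fin n → Fin p) :=
    (Finset.univ.filter (fun w => List.ofFn w ∉ D)).filter
      (fun w => List.ofFn w ∈ wordsOfLen (language X) n) with hCf
  set Rf : Finset (Fin n → Fin p) :=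
    (Finset.univ.filter (fun w => List.ofFn w ∉ D)).filter
      (fun w => ¬(List.ofFn w ∈ wordsOfLen (language X) n)) with hRf
  have hsplit : Hn ν n = (∑ w ∈ Df, Real.negMulLog (f w)) +
      ((∑ w ∈ Cf, Real.negMulLog (f w)) + (∑ w ∈ Rf, Real.negMulLog (f w))) := by
    have e0 : Hn ν n = ∑ w : Fin n → Fin p, Real.negMulLog (f w) := Hn_eq ν n
    rw [e0, ← Finset.sum_filter_add_sum_filter_not Finset.univ
      (fun w => List.ofFn w ∈ D) (fun w => Real.negMulLog (f w)),
      ← Finset.sum_filter_add_sum_filter_not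
        (Finset.univ.filter (fun w => ¬(List.ofFn w ∈ D)))
        (fun w => List.ofFn w ∈ wordsOfLen (language X) n) (fun w => Real.negMulLog (f w))]
  have hRf0 : ∀ w ∈ Rf, Real.negMulLog (f w) = 0 := by
    intro w hw
    rw [hRf, Finset.mem_filter] at hw
    have hsub : patCyl n w ⊆ Xᶜ := by
      intro x hx
      simp only [Set.mem_compl_iff]
      intro hxX
      exact hw.2 (ofFn_mem_language hxX hx)
    have hν0 : ν (patCyl n w) = 0 := by
      apply measure_mono_null hsub
      rw [measure_compl hmeasX (measure_ne_top ν X), hνX, measure_univ]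
      simp
    show Real.negMulLog (ν (patCyl n w)).toReal = 0
    rw [hν0]
    simp
  set s1 := ∑ w ∈ Df, f w with hs1def
  set s2 := ∑ w ∈ Cf, f w with hs2def
  have hDfin : D.Finite := (finite_wordsOfLen (language X) n).subset hD
  have hwords : ∀ l ∈ D, l.length = n := fun l hl => (hD hl).2
  have hofn : ∀ l (hl : l ∈ D), List.ofFn (fun i => l.get (Fin.cast (hwords l hl).symm i)) = l := by
    intro l hl
    apply List.ext_get (by simp [hwords l hl])
    intro i h1 h2
    simp [List.get_ofFn]
  have himg : Df.image List.ofFn = hDfin.toFinset := by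
    ext l
    simp only [Finset.mem_image, Set.Finite.mem_toFinset, hDf, Finset.mem_filter,
      Finset.mem_univ, true_and]
    constructor
    · rintro ⟨w, hw, rfl⟩
      exact hw
    · intro hl
      exact ⟨fun i => l.get (Fin.cast (hwords l hl).symm i),
        by rw [hofn l hl]; exact hl, hofn l hl⟩
  have hcardD : Df.card = D.ncard := by
    rw [← Finset.card_image_of_injective Df List.ofFn_injective, himg,
      ← Set.ncard_eq_toFinset_card _ hDfin]
  set U := ⋃ l ∈ D, centralCylinder l with hU
  have hUmeas : MeasurableSet U := by
    rw [hU]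
    exact MeasurableSet.biUnion hDfin.countable (fun l _ => measurableSet_centralCylinder l)
  have hUnion : ⋃ w ∈ Df, patCyl n w = shiftMap^[n / 2] ⁻¹' U := by
    rw [hU]
    ext x
    simp only [Set.mem_iUnion, Set.mem_preimage, exists_prop]
    constructor
    · rintro ⟨w, hw, hx⟩
      have hw' : List.ofFn w ∈ D := by
        rw [hDf, Finset.mem_filter] at hw
        exact hw.2
      refine ⟨List.ofFn w, hw', ?_⟩
      rw [patCyl_eq_preimage n w] at hx
      exact hx
    · rintro ⟨l, hl, hx⟩
      refine ⟨fun i => l.get (Fin.cast (hwords l hl).symm i), ?_, ?_⟩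
      · rw [hDf, Finset.mem_filter]
        exact ⟨Finset.mem_univ _, by rw [hofn l hl]; exact hl⟩
      · rw [patCyl_eq_preimage n _]
        simp only [Set.mem_preimage]
        rw [hofn l hl]
        exact hx
  have hs1 : s1 = (ν U).toReal := by
    have hdisj : (↑Df : Set (Fin n → Fin p)).PairwiseDisjoint (patCyl n) :=
      fun a _ b _ hab => patCyl_disjoint n hab
    have hmeasure : ν (⋃ w ∈ Df, patCyl n w) = ∑ w ∈ Df, ν (patCyl n w) :=
      measure_biUnion_finset hdisj (fun w _ => measurableSet_patCyl n w)
    have hpre : ν (⋃ w ∈ Df, patCyl n w) = ν U := by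
      rw [hUnion]
      exact hinv.measure_preimage (n / 2) hUmeas
    rw [hs1def, ← hpre, hmeasure, ENNReal.toReal_sum (fun w _ => measure_ne_top ν _)]
  have hγs1 : γ ≤ s1 := by
    rw [hs1]
    calc γ = (ENNReal.ofReal γ).toReal := by rw [ENNReal.toReal_ofReal hγ0.le]
      _ ≤ (ν U).toReal := ENNReal.toReal_mono (measure_ne_top ν U) hmeasγ
  have htotal : ∑ w : Fin n → Fin p, f w = 1 := by
    have h2 := sum_toReal_measure_partition ν (patCyl n) (measurableSet_patCyl n)
      (patCyl_disjoint n) (iUnion_patCyl n) Set.univ MeasurableSet.univ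
    simp only [Set.univ_inter] at h2
    rw [measure_univ, ENNReal.toReal_one] at h2
    exact h2
  have hs1nn : 0 ≤ s1 := Finset.sum_nonneg fun w _ => hfnn w
  have hs2nn : 0 ≤ s2 := Finset.sum_nonneg fun w _ => hfnn w
  have hs12 : s1 + s2 ≤ 1 := by
    rw [← htotal]
    have hdisjf : Disjoint Df Cf := by
      rw [Finset.disjoint_left]
      intro w hw1 hw2
      rw [hDf, Finset.mem_filter] at hw1
      rw [hCf, Finset.mem_filter, Finset.mem_filter] at hw2
      exact hw2.1.2 hw1.2
    rw [hs1def, hs2def, ← Finset.sum_union hdisjf]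
    exact Finset.sum_le_sum_of_subset_of_nonneg (Finset.subset_univ _) (fun w _ _ => hfnn w)
  have hs1le1 : s1 ≤ 1 := by linarith
  have hs2le1 : s2 ≤ 1 := by linarith
  have hDfne : Df.Nonempty := by
    by_contra hcon
    rw [Finset.not_nonempty_iff_eq_empty] at hcon
    have hzero : s1 = 0 := by rw [hs1def, hcon, Finset.sum_empty]
    rw [hzero] at hγs1
    linarith
  have hDpos : 0 < D.ncard := by
    rw [← hcardD]
    exact Finset.card_pos.2 hDfne
  have hDposR : (0 : ℝ) < (D.ncard : ℝ) := by exact_mod_cast hDpos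
  have hHn : (n : ℝ) * h ≤ Hn ν n := n_htop_le_Hn ν hmme n
  have hDfsum : ∑ w ∈ Df, Real.negMulLog (f w) ≤ s1 * Real.log (D.ncard) + 1 := by
    have h1 := sum_negMulLog_le_of_sum Df f (fun w _ => hfnn w)
    rw [hcardD] at h1
    have h2 : Real.negMulLog s1 ≤ 1 := negMulLog_le_one hs1nn hs1le1
    rw [← hs1def] at h1
    linarith
  have hCfcard : (Cf.card : ℝ) ≤ ((wordsOfLen (language X) n).ncard : ℝ) := by
    have h1 : Cf.card ≤ (wordsOfLen (language X) n).ncard := by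
      have h2 := Finset.card_le_card_of_injOn (s := Cf)
        (t := (finite_wordsOfLen (language X) n).toFinset) List.ofFn
        (fun w hw => by
          rw [Finset.mem_coe, Set.Finite.mem_toFinset]
          rw [Finset.mem_coe, hCf, Finset.mem_filter] at hw
          exact hw.2)
        (fun a _ b _ hab => List.ofFn_injective hab)
      rwa [← Set.ncard_eq_toFinset_card _ (finite_wordsOfLen (language X) n)] at h2
    exact_mod_cast h1
  have hlogLn : Real.log ((wordsOfLen (language X) n).ncard) ≤ Real.log C2 + n * h := by
    have h1 := hC2 n
    have h2 : (0 : ℝ) < ((wordsOfLen (language X) n).ncard : ℝ) := by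
      exact_mod_cast one_le_ncard_L hXne n
    calc Real.log ((wordsOfLen (language X) n).ncard) ≤
        Real.log (C2 * Real.exp (n * h)) := Real.log_le_log h2 h1
      _ = Real.log C2 + n * h := by
          rw [Real.log_mul hC2pos.ne' (Real.exp_pos _).ne', Real.log_exp]
  have hCfsum : ∑ w ∈ Cf, Real.negMulLog (f w) ≤ s2 * (Real.log C2 + n * h) + 1 := by
    have h1 := sum_negMulLog_le_of_sum Cf f (fun w _ => hfnn w)
    rw [← hs2def] at h1
    have h2 : Real.negMulLog s2 ≤ 1 := negMulLog_le_one hs2nn hs2le1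
    have h3 : Real.log (Cf.card) ≤ Real.log C2 + n * h := by
      rcases Nat.eq_zero_or_pos Cf.card with h0 | hpos
      · rw [h0]
        simp only [Nat.cast_zero, Real.log_zero]
        have : 0 ≤ (n : ℝ) * h := mul_nonneg (Nat.cast_nonneg n) hh0
        linarith
      · calc Real.log (Cf.card) ≤ Real.log ((wordsOfLen (language X) n).ncard : ℝ) :=
            Real.log_le_log (by exact_mod_cast hpos) hCfcard
          _ ≤ _ := hlogLn
    have h4 : s2 * Real.log (Cf.card) ≤ s2 * (Real.log C2 + n * h) :=
      mul_le_mul_of_nonneg_left h3 hs2nn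
    linarith
  have hRfsum : ∑ w ∈ Rf, Real.negMulLog (f w) = 0 := Finset.sum_eq_zero hRf0
  have hmain : (n : ℝ) * h ≤ s1 * Real.log (D.ncard) + s2 * (Real.log C2 + n * h) + 2 := by
    have := hsplit
    linarith
  set LD := Real.log (D.ncard) with hLD
  have halg : s1 * ((n : ℝ) * h - LD) ≤ K := by
    have h1 : s1 ≤ 1 - s2 := by linarith
    have hnh : 0 ≤ (n : ℝ) * h := mul_nonneg (Nat.cast_nonneg n) hh0
    have h2 : s1 * ((n : ℝ) * h) ≤ (1 - s2) * ((n : ℝ) * h) :=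
      mul_le_mul_of_nonneg_right h1 hnh
    have h3 : s2 * Real.log C2 ≤ Real.log C2 := by nlinarith
    rw [hK]
    nlinarith
  rcases le_or_gt ((n : ℝ) * h) LD with hcase | hcase
  · have h1 : Real.exp ((n : ℝ) * h) ≤ (D.ncard : ℝ) := by
      calc Real.exp ((n : ℝ) * h) ≤ Real.exp LD := Real.exp_le_exp.2 hcase
        _ = (D.ncard : ℝ) := by rw [hLD, Real.exp_log hDposR]
    have hC9le1 : Real.exp (-(K / γ)) ≤ 1 := by
      rw [Real.exp_le_one_iff]
      have : 0 ≤ K / γ := div_nonneg hKpos.le hγ0.le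
      linarith
    calc Real.exp (-(K / γ)) * Real.exp ((n : ℝ) * h) ≤ 1 * Real.exp ((n : ℝ) * h) :=
        mul_le_mul_of_nonneg_right hC9le1 (Real.exp_pos _).le
      _ = Real.exp ((n : ℝ) * h) := one_mul _
      _ ≤ (D.ncard : ℝ) := h1
  · have h1 : γ * ((n : ℝ) * h - LD) ≤ K := by
      have h2 := mul_le_mul_of_nonneg_right hγs1 (le_of_lt (sub_pos.2 hcase))
      linarith
    have h2 : (n : ℝ) * h - K / γ ≤ LD := by
      rw [← sub_nonneg]
      have h3 : (n : ℝ) * h - LD ≤ K / γ := by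
        rw [le_div_iff₀ hγ0]
        calc ((n : ℝ) * h - LD) * γ = γ * ((n : ℝ) * h - LD) := by ring
          _ ≤ K := h1
      linarith
    calc Real.exp (-(K / γ)) * Real.exp ((n : ℝ) * h) =
        Real.exp ((n : ℝ) * h - K / γ) := by
          rw [← Real.exp_add]
          ring_nf
      _ ≤ Real.exp LD := Real.exp_le_exp.2 h2
      _ = (D.ncard : ℝ) := by rw [hLD, Real.exp_log hDposR]
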